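/- For every β ∈ ℤ and all Laurent polynomials h, k ∈ R, the rank-one trace cocycle satisfies the local Mumford formula: c_Lie((0,h)^{(β)}, (0,k)^{(β)}) = (1 − 6β + 6β²) · c_Lie((0,h)^{(1)}, (0,k)^{(1)}), where for h ∈ R the twist (0,h)^{(β)} is the endomorphism of K given by f ↦ h·f′ + β·h′·f. (This is the identity vir_β = (1 − 6β + 6β²)·vir₁, where vir₁ is the standard Virasoro cocycle.) -/

import Mathlib

noncomputable section

/-- `K = ℂ((z))`, the field of formal Laurent series over `ℂ`. -/
abbrev K : Type := LaurentSeries ℂ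

/-- The formal derivative of a Laurent series. -/
def fd (f : K) : K :=
  ⟨fun k => ((k + 1 : ℤ) : ℂ) * f.coeff (k + 1), by
    apply Set.IsPWO.mono (f.isPWO_support.image_of_monotone
      (f := fun x => x - 1) (fun _ _ h => sub_le_sub_right h 1))
    intro k hk
    have : f.coeff (k + 1) ≠ 0 := by
      intro h
      simp [Function.mem_support, h] at hk
    exact ⟨k + 1, this, by ring⟩⟩

/-- The projection of `K` onto `K₋` along `K₊` (truncation to negative degrees). -/
def tneg (f : K) : K :=
  ⟨fun k => if k < 0 then f.coeff k else 0, by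
    refine f.isPWO_support.mono (fun k hk => ?_)
    simp only [Function.mem_support] at hk ⊢
    by_cases h : k < 0
    · simpa [h] using hk
    · simp [h] at hk⟩

/-- The projection of `K` onto `K₊` along `K₋` (truncation to non-negative degrees). -/
def tpos (f : K) : K :=
  ⟨fun k => if 0 ≤ k then f.coeff k else 0, by
    refine f.isPWO_support.mono (fun k hk => ?_)
    simp only [Function.mem_support] at hk ⊢
    by_cases h : (0:ℤ) ≤ k
    · simpa [h] using hk
    · simp [h] at hk⟩

/-- The trace cocycle `c_Lie(T₁, T₂) = Tr(T₁^{+−} T₂^{−+} − T₂^{+−} T₁^{−+} : K₋ → K₋)`,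
computed as the finitely supported sum of the diagonal coefficients in the basis
`{z^m : m < 0}` of `K₋`. -/
def cLieK (T₁ T₂ : K → K) : ℂ :=
  ∑ᶠ (m : ℤ) (_ : m < 0),
    ((tneg (T₁ (tpos (T₂ (tneg (HahnSeries.single m 1)))))
      - tneg (T₂ (tpos (T₁ (tneg (HahnSeries.single m 1)))))).coeff m)

open LaurentPolynomial

/-- The ring `R = ℂ[z, z⁻¹]` of Laurent polynomials. -/
abbrev Rl : Type := LaurentPolynomial ℂ

/-- The inclusion `R = ℂ[z, z⁻¹] ⊆ K`. -/
def toK (f : Rl) : K :=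
  ⟨fun k => f.coeff k, by
    refine (f.coeff.support.finite_toSet.isPWO).mono (fun k hk => ?_)
    simpa [Finsupp.mem_support_iff] using hk⟩

/-- The `β`-twisted operator `(0,h)^{(β)} : f ↦ h·f′ + β·h′·f` on `K`. -/
def Lop (β : ℤ) (h : Rl) : K → K :=
  fun f => toK h * fd f + β • (fd (toK h) * f)

-- ============ auxiliary lemmas ============
namespace MumfordAux

lemma fd_coeff (f : K) (t : ℤ) : (fd f).coeff t = ((t + 1 : ℤ) : ℂ) * f.coeff (t + 1) := rfl
lemma tneg_coeff (f : K) (t : ℤ) : (tneg f).coeff t = if t < 0 then f.coeff t else 0 := rfl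
lemma tpos_coeff (f : K) (t : ℤ) : (tpos f).coeff t = if 0 ≤ t then f.coeff t else 0 := rfl
lemma toK_coeff (h : Rl) (t : ℤ) : (toK h).coeff t = h.coeff t := rfl

/-- coefficient extraction as an additive monoid hom. -/
def coeffHom (t : ℤ) : K →+ ℂ :=
  AddMonoidHom.mk' (fun f => f.coeff t) (fun _ _ => HahnSeries.coeff_add)

lemma coeff_sum {ι : Type} (s : Finset ι) (F : ι → K) (t : ℤ) :
    (∑ i ∈ s, F i).coeff t = ∑ i ∈ s, (F i).coeff t :=
  map_sum (coeffHom t) F s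

lemma zsmul_coeff (n : ℤ) (x : K) (t : ℤ) : (n • x).coeff t = (n : ℂ) * x.coeff t := by
  have := map_zsmul (coeffHom t) n x
  simpa [coeffHom, zsmul_eq_mul] using this

lemma fd_add (x y : K) : fd (x + y) = fd x + fd y := by
  ext t
  simp only [fd_coeff, HahnSeries.coeff_add]
  ring

lemma tpos_add (x y : K) : tpos (x + y) = tpos x + tpos y := by
  ext t
  simp only [tpos_coeff, HahnSeries.coeff_add]
  split <;> simp

lemma lop_add (β : ℤ) (h : Rl) (x y : K) : Lop β h (x + y) = Lop β h x + Lop β h y := by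
  show toK h * fd (x + y) + β • (fd (toK h) * (x + y))
      = (toK h * fd x + β • (fd (toK h) * x)) + (toK h * fd y + β • (fd (toK h) * y))
  rw [fd_add]
  simp only [zsmul_eq_mul]
  ring

lemma fd_single (m : ℤ) (c : ℂ) :
    fd (HahnSeries.single m c) = HahnSeries.single (m - 1) ((m : ℂ) * c) := by
  ext t
  rw [fd_coeff]
  by_cases hm : t = m - 1
  · subst hm
    rw [HahnSeries.coeff_single, HahnSeries.coeff_single,
      if_pos (by omega : m - 1 + 1 = m), if_pos rfl, show m - 1 + 1 = m from by omega]
  · rw [HahnSeries.coeff_single, HahnSeries.coeff_single,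
      if_neg (by omega : ¬ t + 1 = m), if_neg hm, mul_zero]

lemma tpos_single (e : ℤ) (v : ℂ) :
    tpos (HahnSeries.single e v) = HahnSeries.single e (if 0 ≤ e then v else 0) := by
  ext t
  rw [tpos_coeff]
  by_cases he : t = e
  · subst he; simp [HahnSeries.coeff_single]
  · simp [HahnSeries.coeff_single, he]

lemma tneg_single_neg (m : ℤ) (hm : m < 0) (v : ℂ) :
    tneg (HahnSeries.single m v) = HahnSeries.single m v := by
  ext t
  rw [tneg_coeff]
  by_cases he : t = m
  · subst he; simp [HahnSeries.coeff_single, hm]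
  · simp [HahnSeries.coeff_single, he]

lemma lop_single_coeff (β : ℤ) (h : Rl) (m : ℤ) (c : ℂ) (t : ℤ) :
    (Lop β h (HahnSeries.single m c)).coeff t
      = ((m : ℂ) + (β : ℂ) * ((t - m + 1 : ℤ) : ℂ)) * (h.coeff (t - m + 1) * c) := by
  have e1 : (toK h * fd (HahnSeries.single m c)).coeff t = h.coeff (t - m + 1) * ((m : ℂ) * c) := by
    rw [fd_single]
    have h2 := HahnSeries.coeff_mul_single_add (x := toK h) (r := (m : ℂ) * c)
      (a := t - (m - 1)) (b := m - 1)
    rw [show t - (m - 1) + (m - 1) = t from by ring] at h2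
    rw [h2, show t - (m - 1) = t - m + 1 from by ring, toK_coeff]
  have e2 : (fd (toK h) * HahnSeries.single m c).coeff t
      = ((t - m + 1 : ℤ) : ℂ) * h.coeff (t - m + 1) * c := by
    have h2 := HahnSeries.coeff_mul_single_add (x := fd (toK h)) (r := c) (a := t - m) (b := m)
    rw [show t - m + m = t from by ring] at h2
    rw [h2, fd_coeff, toK_coeff]
  show (toK h * fd (HahnSeries.single m c) + β • (fd (toK h) * HahnSeries.single m c)).coeff t = _
  rw [HahnSeries.coeff_add, zsmul_coeff, e1, e2]
  ring

lemma lop_single (β : ℤ) (kk : Rl) (m : ℤ) (c : ℂ) :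
    Lop β kk (HahnSeries.single m c)
      = ∑ b ∈ kk.coeff.support, HahnSeries.single (m + b - 1)
          (((m : ℂ) + (β : ℂ) * (b : ℂ)) * (kk.coeff b * c)) := by
  ext t
  rw [lop_single_coeff, coeff_sum]
  rw [Finset.sum_eq_single (t - m + 1)
    (fun b _ hb => by rw [HahnSeries.coeff_single, if_neg (by omega : ¬ t = m + b - 1)])
    (fun hb => by
      rw [HahnSeries.coeff_single, Finsupp.notMem_support_iff.mp hb]
      simp)]
  rw [HahnSeries.coeff_single, if_pos (by omega : t = m + (t - m + 1) - 1)]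

/-- The per-monomial quadratic weight. -/
def Pq (β b m : ℤ) : ℂ :=
  ((m : ℂ) + (β : ℂ) * (b : ℂ)) * ((m : ℂ) + (b : ℂ) - 1 + (β : ℂ) * (2 - (b : ℂ)))

/-- The inner coefficient computation for the cocycle. -/
lemma g1_eq (β : ℤ) (h kk : Rl) (m : ℤ) (hm : m < 0) :
    (tneg (Lop β h (tpos (Lop β kk (tneg (HahnSeries.single m 1)))))).coeff m
      = ∑ b ∈ kk.coeff.support,
          (if 1 - b ≤ m then Pq β b m else 0) * (kk.coeff b * h.coeff (2 - b)) := by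
  rw [tneg_single_neg m hm, lop_single]
  rw [show tpos (∑ b ∈ kk.coeff.support, HahnSeries.single (m + b - 1)
        (((m : ℂ) + (β : ℂ) * (b : ℂ)) * (kk.coeff b * 1)))
      = ∑ b ∈ kk.coeff.support, tpos (HahnSeries.single (m + b - 1)
        (((m : ℂ) + (β : ℂ) * (b : ℂ)) * (kk.coeff b * 1)))
    from map_sum (AddMonoidHom.mk' tpos tpos_add) _ _]
  rw [show Lop β h (∑ b ∈ kk.coeff.support, tpos (HahnSeries.single (m + b - 1)
        (((m : ℂ) + (β : ℂ) * (b : ℂ)) * (kk.coeff b * 1))))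
      = ∑ b ∈ kk.coeff.support, Lop β h (tpos (HahnSeries.single (m + b - 1)
        (((m : ℂ) + (β : ℂ) * (b : ℂ)) * (kk.coeff b * 1))))
    from map_sum (AddMonoidHom.mk' (Lop β h) (lop_add β h)) _ _]
  rw [tneg_coeff, if_pos hm, coeff_sum]
  refine Finset.sum_congr rfl (fun b _ => ?_)
  rw [tpos_single, lop_single_coeff]
  rw [show m - (m + b - 1) + 1 = 2 - b from by ring]
  rcases le_or_gt (1 - b) m with hc | hc
  · rw [if_pos (by omega : (0:ℤ) ≤ m + b - 1), if_pos hc, Pq]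
    push_cast
    ring
  · rw [if_neg (by omega : ¬ (0:ℤ) ≤ m + b - 1), if_neg (by omega : ¬ 1 - b ≤ m)]
    ring

/-- The integrand of `cLieK` for the twisted operators. -/
def Gexp (β : ℤ) (h kk : Rl) (m : ℤ) : ℂ :=
  (tneg (Lop β h (tpos (Lop β kk (tneg (HahnSeries.single m 1)))))
    - tneg (Lop β kk (tpos (Lop β h (tneg (HahnSeries.single m 1)))))).coeff m

lemma cLieK_lop (β : ℤ) (h kk : Rl) :
    cLieK (Lop β h) (Lop β kk) = ∑ᶠ (m : ℤ) (_ : m < 0), Gexp β h kk m := rfl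

lemma Gexp_eq (β : ℤ) (h kk : Rl) (m : ℤ) (hm : m < 0) :
    Gexp β h kk m
      = (∑ b ∈ kk.coeff.support, (if 1 - b ≤ m then Pq β b m else 0) * (kk.coeff b * h.coeff (2 - b)))
        - ∑ a ∈ h.coeff.support, (if 1 - a ≤ m then Pq β a m else 0) * (h.coeff a * kk.coeff (2 - a)) := by
  rw [Gexp, HahnSeries.coeff_sub, g1_eq β h kk m hm, g1_eq β kk h m hm]

/-- The basic per-monomial sum. -/
def Qs (β b : ℤ) : ℂ := ∑ m ∈ Finset.Ico (1 - b) 0, Pq β b m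

lemma sum_trunc (Mz b : ℤ) (hb : b ≤ Mz) (q : ℤ → ℂ) :
    (∑ m ∈ Finset.Ico (1 - Mz) 0, if 1 - b ≤ m then q m else 0)
      = ∑ m ∈ Finset.Ico (1 - b) 0, q m := by
  rw [← Finset.sum_filter]
  congr 1
  ext x
  simp only [Finset.mem_filter, Finset.mem_Ico]
  omega

lemma cLieK_eq (β : ℤ) (h kk : Rl) :
    cLieK (Lop β h) (Lop β kk)
      = ∑ b ∈ kk.coeff.support, Qs β b * (kk.coeff b * h.coeff (2 - b))
        - ∑ a ∈ h.coeff.support, Qs β a * (h.coeff a * kk.coeff (2 - a)) := by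
  classical
  set Mz : ℤ := (((h.coeff.support ∪ kk.coeff.support).sup Int.toNat : ℕ) : ℤ) with hMz
  have hbound : ∀ b ∈ h.coeff.support ∪ kk.coeff.support, b ≤ Mz := by
    intro b hb
    calc b ≤ (b.toNat : ℤ) := Int.self_le_toNat b
    _ ≤ Mz := by
          rw [hMz]
          exact_mod_cast Finset.le_sup (f := Int.toNat) hb
  have hGzero : ∀ m : ℤ, m < 0 → m < 1 - Mz → Gexp β h kk m = 0 := by
    intro m hm hmM
    rw [Gexp_eq β h kk m hm]
    rw [Finset.sum_eq_zero, Finset.sum_eq_zero, sub_zero]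
    · intro a ha
      have hA := hbound a (Finset.mem_union_left _ ha)
      rw [if_neg (by omega : ¬ 1 - a ≤ m), zero_mul]
    · intro b hb
      have hB := hbound b (Finset.mem_union_right _ hb)
      rw [if_neg (by omega : ¬ 1 - b ≤ m), zero_mul]
  have key : cLieK (Lop β h) (Lop β kk) = ∑ m ∈ Finset.Ico (1 - Mz) 0, Gexp β h kk m := by
    rw [cLieK_lop]
    refine finsum_cond_eq_sum_of_cond_iff _ ?_
    intro m hGm
    simp only [Finset.mem_Ico]
    constructor
    · intro hm
      refine ⟨?_, hm⟩
      by_contra hc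
      exact hGm (hGzero m hm (by omega))
    · intro hm; exact hm.2
  rw [key]
  have hstep : ∀ m ∈ Finset.Ico (1 - Mz) 0, Gexp β h kk m
      = (∑ b ∈ kk.coeff.support, (if 1 - b ≤ m then Pq β b m else 0) * (kk.coeff b * h.coeff (2 - b)))
        - ∑ a ∈ h.coeff.support, (if 1 - a ≤ m then Pq β a m else 0) * (h.coeff a * kk.coeff (2 - a)) := by
    intro m hmem
    exact Gexp_eq β h kk m (Finset.mem_Ico.mp hmem).2
  rw [Finset.sum_congr rfl hstep, Finset.sum_sub_distrib]
  congr 1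
  · rw [Finset.sum_comm]
    refine Finset.sum_congr rfl (fun b hb => ?_)
    rw [← Finset.sum_mul, sum_trunc Mz b (hbound b (Finset.mem_union_right _ hb))]
    rfl
  · rw [Finset.sum_comm]
    refine Finset.sum_congr rfl (fun a ha => ?_)
    rw [← Finset.sum_mul, sum_trunc Mz a (hbound a (Finset.mem_union_left _ ha))]
    rfl

lemma sum_Ico_neg (f : ℤ → ℂ) (n : ℕ) :
    ∑ m ∈ Finset.Ico (-(n : ℤ)) 0, f m = ∑ j ∈ Finset.range n, f (-(j : ℤ) - 1) := by
  induction n with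
  | zero => simp
  | succ n ih =>
    have hins : Finset.Ico (-((n + 1 : ℕ) : ℤ)) 0
        = insert (-((n + 1 : ℕ) : ℤ)) (Finset.Ico (-(n : ℤ)) 0) := by
      ext x
      simp only [Finset.mem_Ico, Finset.mem_insert]
      push_cast
      omega
    rw [hins, Finset.sum_insert (by
      simp only [Finset.mem_Ico]
      push_cast
      omega), Finset.sum_range_succ, ih,
      show (-((n + 1 : ℕ) : ℤ)) = -(n : ℤ) - 1 from by push_cast; ring]
    ring

lemma p1 (n : ℕ) : ∑ j ∈ Finset.range n, ((j : ℂ) + 1) = (n : ℂ) * ((n : ℂ) + 1) / 2 := by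
  induction n with
  | zero => simp
  | succ n ih =>
    rw [Finset.sum_range_succ, ih]
    push_cast
    ring

lemma p2 (n : ℕ) : ∑ j ∈ Finset.range n, ((j : ℂ) + 1) ^ 2
    = (n : ℂ) * ((n : ℂ) + 1) * (2 * (n : ℂ) + 1) / 6 := by
  induction n with
  | zero => simp
  | succ n ih =>
    rw [Finset.sum_range_succ, ih]
    push_cast
    ring

lemma Qs_eq (β b : ℤ) : Qs β b = (1 - 6 * (β : ℂ) + 6 * (β : ℂ) ^ 2) * Qs 1 b := by
  rcases le_or_gt b 1 with hb | hb
  · have hemp : Finset.Ico (1 - b) 0 = ∅ := Finset.Ico_eq_empty (by omega)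
    simp [Qs, hemp]
  · obtain ⟨n, hn⟩ : ∃ n : ℕ, (n : ℤ) = b - 1 := ⟨(b - 1).toNat, Int.toNat_of_nonneg (by omega)⟩
    have hbc : (b : ℂ) = (n : ℂ) + 1 := by
      have hb' : b = (n : ℤ) + 1 := by omega
      rw [hb']
      push_cast
      ring
    have hQ : ∀ γ : ℤ, Qs γ b
        = (n : ℂ) * ((n : ℂ) + 1) * (2 * (n : ℂ) + 1) / 6
          - ((n : ℂ) + 2 * (γ : ℂ)) * ((n : ℂ) * ((n : ℂ) + 1) / 2)
          + (n : ℂ) * ((γ : ℂ) * ((n : ℂ) + 1) * ((n : ℂ) + (γ : ℂ) * (1 - (n : ℂ)))) := by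
      intro γ
      have hico : Finset.Ico (1 - b) 0 = Finset.Ico (-(n : ℤ)) 0 := by
        rw [show (1 : ℤ) - b = -(n : ℤ) from by omega]
      rw [Qs, hico, sum_Ico_neg]
      have expand : ∀ j ∈ Finset.range n, Pq γ b (-(j : ℤ) - 1)
          = ((j : ℂ) + 1) ^ 2 - ((n : ℂ) + 2 * (γ : ℂ)) * ((j : ℂ) + 1)
            + (γ : ℂ) * ((n : ℂ) + 1) * ((n : ℂ) + (γ : ℂ) * (1 - (n : ℂ))) := by
        intro j _
        rw [Pq]
        push_cast
        rw [hbc]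
        ring
      rw [Finset.sum_congr rfl expand]
      rw [Finset.sum_add_distrib, Finset.sum_sub_distrib, ← Finset.mul_sum, p1, p2,
        Finset.sum_const, Finset.card_range, nsmul_eq_mul]
    rw [hQ β, hQ 1]
    push_cast
    field_simp
    ring

end MumfordAux

/-- The local Mumford formula `vir_β = (1 − 6β + 6β²) · vir₁` for the rank-one trace
cocycle on the `β`-twisted vector-field operators. -/
theorem local_mumford_formula (β : ℤ) (h k : Rl) :
    cLieK (Lop β h) (Lop β k) =
      (1 - 6 * (β : ℂ) + 6 * (β : ℂ) ^ 2) * cLieK (Lop 1 h) (Lop 1 k) := by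
  rw [MumfordAux.cLieK_eq β h k, MumfordAux.cLieK_eq 1 h k]
  rw [mul_sub, Finset.mul_sum, Finset.mul_sum]
  congr 1
  · exact Finset.sum_congr rfl fun b _ => by rw [MumfordAux.Qs_eq β b]; ring
  · exact Finset.sum_congr rfl fun a _ => by rw [MumfordAux.Qs_eq β a]; ring

end
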